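/- arXiv:1905.07449 — 5 statements merged into one kernel-verified Lean document; each statement's English description precedes it below -/
import Mathlib

section
/- Regard the steady-state probability π_k (given by the matrix-tree formula) as a function of a single off-diagonal rate W_ij > 0, all other rates held fixed. Then for every state k, |W_ij · dπ_k/dW_ij| ≤ π_k (1 - π_k); equivalently |∂π_k / ∂ ln W_ij| ≤ π_k(1-π_k). -/
open Finset

attribute [local instance] Classical.propDecidable

/-- The transition graph of a rate matrix: an edge between `i ≠ j` whenever
both rates are positive. -/
def transGraph {V : Type*} (W : V → V → ℝ) : SimpleGraph V where
  Adj i j := i ≠ j ∧ 0 < W i j ∧ 0 < W j i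
  symm := ⟨fun i j ⟨h, h1, h2⟩ => ⟨h.symm, h2, h1⟩⟩
  loopless := ⟨fun i ⟨h, _, _⟩ => h rfl⟩

/-- `T` is a spanning tree of `G`. -/
def IsSpanningTree {V : Type*} (G T : SimpleGraph V) : Prop := T ≤ G ∧ T.IsTree

/-- Weight of spanning tree `T` rooted at `r`: product over the edges of `T`,
each directed towards `r`, of the corresponding rate (`W i j` is the rate of
the jump `j → i`). -/
noncomputable def treeWeight {V : Type*} [Fintype V] (W : V → V → ℝ)
    (T : SimpleGraph V) (r : V) : ℝ :=
  ∏ p ∈ Finset.univ.filter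
      (fun p : V × V => T.Adj p.1 p.2 ∧ T.dist p.2 r + 1 = T.dist p.1 r),
    W p.2 p.1

/-- Sum of rooted-tree weights over all spanning trees of `G`, rooted at `k`. -/
noncomputable def sumTrees {V : Type*} [Fintype V] [DecidableEq V] (W : V → V → ℝ)
    (G : SimpleGraph V) (k : V) : ℝ :=
  ∑ T ∈ Finset.univ.filter (fun T : SimpleGraph V => IsSpanningTree G T),
    treeWeight W T k

/-- Steady state via matrix-tree formula. -/
noncomputable def mttPi {V : Type*} [Fintype V] [DecidableEq V] (W : V → V → ℝ)
    (G : SimpleGraph V) (k : V) : ℝ :=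
  sumTrees W G k / ∑ l : V, sumTrees W G l

/-- Weight of a walk: product of the rates of its directed edges
(a step `a → b` has rate `W b a`). -/
noncomputable def walkWeight {V : Type*} (W : V → V → ℝ) {G : SimpleGraph V} {u v : V}
    (p : G.Walk u v) : ℝ :=
  (p.darts.map (fun d => W d.snd d.fst)).prod

/-- Cycle force of a closed walk. -/
noncomputable def cycleForce {V : Type*} (W : V → V → ℝ) {G : SimpleGraph V} {u : V}
    (p : G.Walk u u) : ℝ :=
  Real.log (walkWeight W p / walkWeight W p.reverse)

/-- `Fmax`: the maximum of `|F_C|` over cycles `C` of `G` containing the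
edge `{m,n}`; `0` if there is none. -/
noncomputable def Fmax {V : Type*} (W : V → V → ℝ) (G : SimpleGraph V) (m n : V) : ℝ :=
  sSup {x : ℝ | ∃ (u : V) (p : G.Walk u u), p.IsCycle ∧ s(m, n) ∈ p.edges ∧
    x = |cycleForce W p|}

/-- `F_{i↔j}`: the maximum entropy produced going from `i` to `j` and back
along non-self-intersecting paths. -/
noncomputable def Fbtw {V : Type*} (W : V → V → ℝ) (G : SimpleGraph V) (i j : V) : ℝ :=
  sSup {x : ℝ | ∃ (p : G.Walk i j) (q : G.Walk j i), p.IsPath ∧ q.IsPath ∧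
    x = |Real.log (walkWeight W p * walkWeight W q /
          (walkWeight W p.reverse * walkWeight W q.reverse))|}

/-- The parameterized rates `W_ij = exp(-(B_ij - E_j - F_ij/2))` on the edges of `G`. -/
noncomputable def rates {V : Type*} (G : SimpleGraph V) (Bp : V → V → ℝ) (Ep : V → ℝ)
    (Fp : V → V → ℝ) : V → V → ℝ :=
  fun i j => if G.Adj i j then Real.exp (-(Bp i j - Ep j - Fp i j / 2)) else 0

/-- Steady state as a function of the parameters. -/
noncomputable def piP {V : Type*} [Fintype V] [DecidableEq V] (G : SimpleGraph V)
    (Bp : V → V → ℝ) (Ep : V → ℝ) (Fp : V → V → ℝ) (k : V) : ℝ :=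
  mttPi (rates G Bp Ep Fp) G k

/-- Replace the symmetric edge parameter of the edge `{m,n}` by `t`. -/
noncomputable def updB {V : Type*} (Bp : V → V → ℝ) (m n : V) (t : ℝ) : V → V → ℝ :=
  fun i j => if (i = m ∧ j = n) ∨ (i = n ∧ j = m) then t else Bp i j

/-- Add `t` to the symmetric edge parameters of all edges in `S`. -/
noncomputable def updBadd {V : Type*} (Bp : V → V → ℝ) (S : Set (Sym2 V)) (t : ℝ) : V → V → ℝ :=
  fun i j => if s(i, j) ∈ S then Bp i j + t else Bp i j

/-- Replace the antisymmetric edge parameter of the edge `{i,j}` by `t`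
(and by `-t` in the reverse direction). -/
noncomputable def updF {V : Type*} (Fp : V → V → ℝ) (i j : V) (t : ℝ) : V → V → ℝ :=
  fun a b => if a = i ∧ b = j then t else if a = j ∧ b = i then -t else Fp a b

/-- The full rate matrix, with diagonal entries fixed by conservation of probability. -/
noncomputable def fullW {V : Type*} [Fintype V] [DecidableEq V] (W : V → V → ℝ) :
    V → V → ℝ :=
  fun i j => if i = j then -∑ l ∈ Finset.univ.filter (fun l => l ≠ j), W l j else W i j

/-- Deleting a non-bridge edge preserves reachability. -/
lemma reach_del {V : Type*} {G : SimpleGraph V} {v w : V}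
    (h : (G \ SimpleGraph.fromEdgeSet {s(v,w)}).Reachable v w) {x y : V}
    (hxy : G.Reachable x y) : (G \ SimpleGraph.fromEdgeSet {s(v,w)}).Reachable x y := by
  obtain ⟨p⟩ := hxy
  induction p with
  | nil => rfl
  | @cons a b c h' p ih =>
    refine SimpleGraph.Reachable.trans ?_ ih
    by_cases he : s(a,b) = s(v,w)
    · rw [Sym2.eq_iff] at he
      rcases he with ⟨rfl, rfl⟩ | ⟨rfl, rfl⟩
      · exact h
      · exact h.symm
    · exact SimpleGraph.Adj.reachable ⟨h', by simp [SimpleGraph.fromEdgeSet_adj, he]⟩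

/-- Every finite connected graph has a spanning tree. -/
lemma exists_spanning_tree {V : Type*} [Fintype V] (G : SimpleGraph V) (h : G.Connected) :
    ∃ T, IsSpanningTree G T := by
  classical
  obtain ⟨n, hn⟩ : ∃ n, G.edgeSet.ncard = n := ⟨_, rfl⟩
  induction n using Nat.strong_induction_on generalizing G with
  | _ n ih =>
    by_cases hac : G.IsAcyclic
    · exact ⟨G, le_refl G, ⟨h, hac⟩⟩
    · rw [SimpleGraph.isAcyclic_iff_forall_edge_isBridge] at hac
      push_neg at hac
      obtain ⟨e, he, hbr⟩ := hac
      induction e with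
      | _ v w =>
      have hadj : G.Adj v w := he
      set G' := G \ SimpleGraph.fromEdgeSet {s(v,w)} with hG'
      have hle : G' ≤ G := sdiff_le
      have hreach : G'.Reachable v w := by
        rw [SimpleGraph.isBridge_iff] at hbr
        push_neg at hbr
        exact hbr
      have hconn' : G'.Connected := by
        have hne : Nonempty V := h.nonempty
        exact { preconnected := fun x y => reach_del hreach (h.preconnected x y) }
      have hedge : G'.edgeSet = G.edgeSet \ {s(v,w)} := by
        rw [hG', SimpleGraph.edgeSet_sdiff, SimpleGraph.edgeSet_fromEdgeSet,
          SimpleGraph.edgeSet_sdiff_sdiff_isDiag]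
      have hfin : G.edgeSet.Finite := Set.toFinite _
      have hlt : G'.edgeSet.ncard < n := by
        rw [← hn, hedge]
        exact Set.ncard_lt_ncard (by
          constructor
          · exact Set.diff_subset
          · intro hsub
            exact (hsub he).2 rfl) hfin
      obtain ⟨T, hT1, hT2⟩ := ih _ hlt G' hconn' rfl
      exact ⟨T, hT1.trans hle, hT2⟩

/-- Product of an ite-modified function is affine in `t`. -/
lemma prod_ite_affine {α : Type*} [DecidableEq α] (S : Finset α) (e : α) (g : α → ℝ) (t : ℝ) :
    (∏ p ∈ S, if p = e then t else g p)
      = (if e ∈ S then 0 else ∏ p ∈ S, g p)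
        + (if e ∈ S then ∏ p ∈ S.erase e, g p else 0) * t := by
  by_cases h : e ∈ S
  · rw [if_pos h, if_pos h, ← Finset.mul_prod_erase S _ h, if_pos rfl,
      Finset.prod_congr rfl (fun p hp => if_neg (Finset.ne_of_mem_erase hp))]
    ring
  · rw [if_neg h, if_neg h,
      Finset.prod_congr rfl (fun p hp => if_neg (by rintro rfl; exact h hp))]
    ring

/-- The set of directed-to-root edges of `T` rooted at `l`. -/
noncomputable def edgesTo {V : Type*} [Fintype V] (T : SimpleGraph V) (l : V) :
    Finset (V × V) :=
  Finset.univ.filter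
      (fun p : V × V => T.Adj p.1 p.2 ∧ T.dist p.2 l + 1 = T.dist p.1 l)

lemma treeWeight_eq {V : Type*} [Fintype V] (W : V → V → ℝ) (T : SimpleGraph V) (l : V) :
    treeWeight W T l = ∏ p ∈ edgesTo T l, W p.2 p.1 := rfl

/-- Constant coefficient. -/
noncomputable def coefA {V : Type*} [Fintype V] [DecidableEq V] (W : V → V → ℝ)
    (G : SimpleGraph V) (i j l : V) : ℝ :=
  ∑ T ∈ Finset.univ.filter (fun T : SimpleGraph V => IsSpanningTree G T),
    (if (j, i) ∈ edgesTo T l then 0 else treeWeight W T l)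

/-- Linear coefficient. -/
noncomputable def coefB {V : Type*} [Fintype V] [DecidableEq V] (W : V → V → ℝ)
    (G : SimpleGraph V) (i j l : V) : ℝ :=
  ∑ T ∈ Finset.univ.filter (fun T : SimpleGraph V => IsSpanningTree G T),
    (if (j, i) ∈ edgesTo T l then ∏ p ∈ (edgesTo T l).erase (j, i), W p.2 p.1 else 0)

lemma sumTrees_affine {V : Type*} [Fintype V] [DecidableEq V] (W : V → V → ℝ)
    (G : SimpleGraph V) (i j l : V) (t : ℝ) :
    sumTrees (fun a b => if a = i ∧ b = j then t else W a b) G l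
      = coefA W G i j l + coefB W G i j l * t := by
  rw [sumTrees, coefA, coefB, Finset.sum_mul, ← Finset.sum_add_distrib]
  refine Finset.sum_congr rfl (fun T _ => ?_)
  rw [treeWeight_eq, treeWeight_eq]
  have hstep : ∀ p : V × V, p ∈ edgesTo T l →
      (if p.2 = i ∧ p.1 = j then t else W p.2 p.1) = if p = (j, i) then t else W p.2 p.1 := by
    intro p _
    by_cases h : p = (j, i)
    · subst h; simp
    · rw [if_neg h, if_neg]
      rintro ⟨h1, h2⟩
      exact h (Prod.ext h2 h1)
  rw [Finset.prod_congr rfl hstep, prod_ite_affine]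

lemma treeWeight_nonneg {V : Type*} [Fintype V] {W : V → V → ℝ}
    (hoff : ∀ i j, i ≠ j → 0 ≤ W i j) (T : SimpleGraph V) (l : V) :
    0 ≤ treeWeight W T l := by
  rw [treeWeight_eq]
  refine Finset.prod_nonneg (fun p hp => ?_)
  have hadj : T.Adj p.1 p.2 := ((Finset.mem_filter.mp hp).2).1
  exact hoff p.2 p.1 hadj.ne'

lemma coefA_nonneg {V : Type*} [Fintype V] [DecidableEq V] {W : V → V → ℝ}
    (hoff : ∀ i j, i ≠ j → 0 ≤ W i j) (G : SimpleGraph V) (i j l : V) :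
    0 ≤ coefA W G i j l := by
  refine Finset.sum_nonneg (fun T _ => ?_)
  split
  · exact le_refl 0
  · exact treeWeight_nonneg hoff T l

lemma coefB_nonneg {V : Type*} [Fintype V] [DecidableEq V] {W : V → V → ℝ}
    (hoff : ∀ i j, i ≠ j → 0 ≤ W i j) (G : SimpleGraph V) (i j l : V) :
    0 ≤ coefB W G i j l := by
  refine Finset.sum_nonneg (fun T _ => ?_)
  split
  · refine Finset.prod_nonneg (fun p hp => ?_)
    have hadj : T.Adj p.1 p.2 :=
      ((Finset.mem_filter.mp (Finset.mem_of_mem_erase hp)).2).1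
    exact hoff p.2 p.1 hadj.ne'
  · exact le_refl 0

lemma treeWeight_pos {V : Type*} [Fintype V] {W : V → V → ℝ} {G : SimpleGraph V}
    {T : SimpleGraph V} (hT : T ≤ transGraph W) (l : V) :
    0 < treeWeight W T l := by
  rw [treeWeight_eq]
  refine Finset.prod_pos (fun p hp => ?_)
  have hadj : (transGraph W).Adj p.1 p.2 := hT ((Finset.mem_filter.mp hp).2).1
  exact (show p.1 ≠ p.2 ∧ 0 < W p.1 p.2 ∧ 0 < W p.2 p.1 from hadj).2.2

lemma sumTrees_pos {V : Type*} [Fintype V] [DecidableEq V] {W : V → V → ℝ}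
    (hoff : ∀ i j, i ≠ j → 0 ≤ W i j) (hconn : (transGraph W).Connected) (l : V) :
    0 < sumTrees W (transGraph W) l := by
  obtain ⟨T₀, hT₀⟩ := exists_spanning_tree (transGraph W) hconn
  refine Finset.sum_pos' (fun T _ => treeWeight_nonneg hoff T l) ?_
  exact ⟨T₀, Finset.mem_filter.mpr ⟨Finset.mem_univ _, hT₀⟩,
    treeWeight_pos (G := transGraph W) hT₀.1 l⟩

/-- the response of `π_k` to the scaling of a single
off-diagonal rate `W_ij` is bounded:
`|W_ij · dπ_k/dW_ij| ≤ π_k(1 - π_k)`. -/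
theorem stmt13 {V : Type*} [Fintype V] [DecidableEq V] (W : V → V → ℝ)
    (hoff : ∀ i j, i ≠ j → 0 ≤ W i j)
    (hsym : ∀ i j, i ≠ j → (0 < W i j ↔ 0 < W j i))
    (hconn : (transGraph W).Connected)
    (i j : V) (hij : i ≠ j) (hpos : 0 < W i j) (k : V) :
    |W i j *
        deriv (fun t =>
          mttPi (fun a b => if a = i ∧ b = j then t else W a b) (transGraph W) k)
          (W i j)|
      ≤ mttPi W (transGraph W) k * (1 - mttPi W (transGraph W) k) := by
  set G := transGraph W with hG
  set t₀ := W i j with ht₀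
  set Ak := coefA W G i j k with hAk
  set Bk := coefB W G i j k with hBk
  set SA := ∑ l : V, coefA W G i j l with hSA
  set SB := ∑ l : V, coefB W G i j l with hSB
  clear_value G t₀ Ak Bk SA SB
  have hmod : (fun a b => if a = i ∧ b = j then t₀ else W a b) = W := by
    funext a b
    by_cases h : a = i ∧ b = j
    · obtain ⟨rfl, rfl⟩ := h; rw [if_pos ⟨rfl, rfl⟩, ht₀]
    · rw [if_neg h]
  -- value identities
  have hsum : ∀ l, sumTrees W G l = coefA W G i j l + coefB W G i j l * t₀ := by
    intro l
    have h := sumTrees_affine W G i j l t₀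
    rwa [hmod] at h
  set N := Ak + Bk * t₀ with hN
  set D := SA + SB * t₀ with hD
  clear_value N D
  have hDsum : D = ∑ l : V, sumTrees W G l := by
    rw [hD, hSA, hSB, Finset.sum_mul, ← Finset.sum_add_distrib]
    exact Finset.sum_congr rfl (fun l _ => (hsum l).symm)
  have hDpos : 0 < D := by
    rw [hDsum]
    have : Nonempty V := hconn.nonempty
    have : Nonempty V := hconn.nonempty
    rw [hG]
    exact Finset.sum_pos (fun l _ => sumTrees_pos hoff (hG ▸ hconn) l) Finset.univ_nonempty
  have hmtt : mttPi W G k = N / D := by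
    rw [mttPi, hDsum, hN, hAk, hBk, hsum k]
  -- rewrite the function as a rational function
  have hfun : (fun t => mttPi (fun a b => if a = i ∧ b = j then t else W a b) G k)
      = fun t => (Ak + Bk * t) / (SA + SB * t) := by
    funext t
    rw [mttPi, sumTrees_affine, hAk, hBk, hSA, hSB, Finset.sum_mul, ← Finset.sum_add_distrib]
    congr 1
    exact Finset.sum_congr rfl (fun l _ => sumTrees_affine W G i j l t)
  -- derivative
  have hd1 : HasDerivAt (fun t : ℝ => Ak + Bk * t) Bk t₀ := by
    simpa using ((hasDerivAt_id t₀).const_mul Bk).const_add Ak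
  have hd2 : HasDerivAt (fun t : ℝ => SA + SB * t) SB t₀ := by
    simpa using ((hasDerivAt_id t₀).const_mul SB).const_add SA
  have hdiv : HasDerivAt (fun t => (Ak + Bk * t) / (SA + SB * t))
      ((Bk * D - N * SB) / D ^ 2) t₀ := by
    have hne : SA + SB * t₀ ≠ 0 := by rw [← hD]; exact hDpos.ne'
    have h := hd1.div hd2 hne
    rw [← hD, ← hN] at h
    exact h
  have hderiv : deriv (fun t =>
      mttPi (fun a b => if a = i ∧ b = j then t else W a b) G k) t₀
      = (Bk * D - N * SB) / D ^ 2 := by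
    rw [hfun]; exact hdiv.deriv
  rw [hderiv, hmtt]
  -- nonnegativity facts
  have hA0 : 0 ≤ Ak := by rw [hAk]; exact coefA_nonneg hoff G i j k
  have hB0 : 0 ≤ Bk := by rw [hBk]; exact coefB_nonneg hoff G i j k
  have hAle : Ak ≤ SA := by
    rw [hAk, hSA]
    exact Finset.single_le_sum (fun l _ => coefA_nonneg hoff G i j l) (Finset.mem_univ k)
  have hBle : Bk ≤ SB := by
    rw [hBk, hSB]
    exact Finset.single_le_sum (fun l _ => coefB_nonneg hoff G i j l) (Finset.mem_univ k)
  have ht0 : 0 < t₀ := hpos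
  have hD2 : (0:ℝ) < D ^ 2 := pow_pos hDpos 2
  have key : |t₀ * (Bk * D - N * SB)| ≤ N * (D - N) := by
    have h1 : Bk * D - N * SB = Bk * (SA - Ak) - Ak * (SB - Bk) := by
      rw [hD, hN]; ring
    have h2 : N * (D - N) = (Ak + Bk * t₀) * ((SA - Ak) + (SB - Bk) * t₀) := by
      rw [hD, hN]; ring
    rw [h1, h2]
    rcases abs_cases (t₀ * (Bk * (SA - Ak) - Ak * (SB - Bk))) with ⟨he, _⟩ | ⟨he, _⟩ <;>
      rw [he] <;>
      nlinarith [mul_nonneg hA0 (sub_nonneg.mpr hBle), mul_nonneg hB0 (sub_nonneg.mpr hAle),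
        mul_nonneg hA0 (sub_nonneg.mpr hAle),
        mul_nonneg (mul_nonneg hB0 (sub_nonneg.mpr hBle)) (mul_pos ht0 ht0).le,
        mul_nonneg (mul_nonneg hA0 (sub_nonneg.mpr hBle)) ht0.le,
        mul_nonneg (mul_nonneg hB0 (sub_nonneg.mpr hAle)) ht0.le]
  calc |t₀ * ((Bk * D - N * SB) / D ^ 2)|
      = |t₀ * (Bk * D - N * SB)| / D ^ 2 := by
        rw [mul_div_assoc', abs_div, abs_of_pos hD2]
    _ ≤ (N * (D - N)) / D ^ 2 := by gcongr
    _ = N / D * (1 - N / D) := by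
        have hDne : D ≠ 0 := hDpos.ne'
        field_simp
end

section
/- For every state k and every edge {i,j} of G, the response of the steady state to the antisymmetric edge parameter satisfies |∂π_k / ∂F_ij| ≤ π_k (1 - π_k) ≤ 1/4. -/
open Finset

attribute [local instance] Classical.propDecidable

noncomputable def alphaP {V : Type*} (i j : V) (p : V × V) : ℝ :=
  (if p = (j, i) then 1 else 0) - (if p = (i, j) then 1 else 0)

lemma rates_nonneg {V : Type*} (G : SimpleGraph V) (Bp : V → V → ℝ) (Ep : V → ℝ)
    (Fp : V → V → ℝ) (a b : V) : 0 ≤ rates G Bp Ep Fp a b := by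
  unfold rates; split_ifs
  · exact (Real.exp_pos _).le
  · exact le_refl _

lemma rates_updF {V : Type*} (G : SimpleGraph V) (Bp : V → V → ℝ) (Ep : V → ℝ)
    (Fp : V → V → ℝ) (i j : V) (hij : i ≠ j) (p : V × V) (t : ℝ) :
    rates G Bp Ep (updF Fp i j t) p.2 p.1
      = rates G Bp Ep (updF Fp i j 0) p.2 p.1 * Real.exp (alphaP i j p * t / 2) := by
  obtain ⟨a, b⟩ := p
  unfold rates updF alphaP
  by_cases h : G.Adj b a
  · simp only [h, if_true, Prod.mk.injEq]
    by_cases h1 : a = j ∧ b = i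
    · have hn : ¬ (a = i ∧ b = j) := fun hh => hij (hh.1 ▸ h1.1)
      rw [if_pos ⟨h1.2, h1.1⟩, if_pos ⟨h1.2, h1.1⟩, if_pos h1, if_neg hn, ← Real.exp_add]
      congr 1; ring
    · by_cases h2 : a = i ∧ b = j
      · have hn1 : ¬ (b = i ∧ a = j) := fun hh => h1 ⟨hh.2, hh.1⟩
        rw [if_neg hn1, if_pos ⟨h2.2, h2.1⟩, if_neg hn1, if_pos ⟨h2.2, h2.1⟩,
          if_neg h1, if_pos h2, ← Real.exp_add]
        congr 1; ring
      · have hn1 : ¬ (b = i ∧ a = j) := fun hh => h1 ⟨hh.2, hh.1⟩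
        have hn2 : ¬ (b = j ∧ a = i) := fun hh => h2 ⟨hh.2, hh.1⟩
        rw [if_neg hn1, if_neg hn2, if_neg hn1, if_neg hn2, if_neg h1, if_neg h2, ← Real.exp_add]
        congr 1; ring
  · simp [h]
noncomputable def Acoef {V : Type*} [Fintype V] (i j : V) (T : SimpleGraph V) (k : V) : ℝ :=
  ∑ p ∈ Finset.univ.filter
      (fun p : V × V => T.Adj p.1 p.2 ∧ T.dist p.2 k + 1 = T.dist p.1 k),
    alphaP i j p

lemma abs_Acoef_le {V : Type*} [Fintype V] (i j : V) (T : SimpleGraph V) (k : V) :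
    |Acoef i j T k| ≤ 1 := by
  unfold Acoef alphaP
  rw [Finset.sum_sub_distrib, Finset.sum_ite_eq' _ ((j, i) : V × V) (fun _ => (1 : ℝ)),
    Finset.sum_ite_eq' _ ((i, j) : V × V) (fun _ => (1 : ℝ))]
  split_ifs <;> norm_num

lemma treeWeight_updF {V : Type*} [Fintype V] (G : SimpleGraph V) (Bp : V → V → ℝ)
    (Ep : V → ℝ) (Fp : V → V → ℝ) (i j : V) (hij : i ≠ j) (T : SimpleGraph V) (k : V) (t : ℝ) :
    treeWeight (rates G Bp Ep (updF Fp i j t)) T k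
      = treeWeight (rates G Bp Ep (updF Fp i j 0)) T k * Real.exp (Acoef i j T k * t / 2) := by
  unfold treeWeight Acoef
  rw [Finset.prod_congr rfl (fun p _ => rates_updF G Bp Ep Fp i j hij p t),
    Finset.prod_mul_distrib, ← Real.exp_sum, ← Finset.sum_div, ← Finset.sum_mul]

lemma treeWeight_nonneg_s14 {V : Type*} [Fintype V] (G : SimpleGraph V) (Bp : V → V → ℝ)
    (Ep : V → ℝ) (Fp : V → V → ℝ) (T : SimpleGraph V) (k : V) :
    0 ≤ treeWeight (rates G Bp Ep Fp) T k :=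
  Finset.prod_nonneg fun p _ => rates_nonneg G Bp Ep Fp p.2 p.1

lemma sumTrees_updF {V : Type*} [Fintype V] [DecidableEq V] (G : SimpleGraph V)
    (Bp : V → V → ℝ) (Ep : V → ℝ) (Fp : V → V → ℝ) (i j : V) (hij : i ≠ j) (l : V) (t : ℝ) :
    sumTrees (rates G Bp Ep (updF Fp i j t)) G l
      = ∑ T ∈ Finset.univ.filter (fun T : SimpleGraph V => IsSpanningTree G T),
          treeWeight (rates G Bp Ep (updF Fp i j 0)) T l * Real.exp (Acoef i j T l * t / 2) := by
  unfold sumTrees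
  exact Finset.sum_congr rfl fun T _ => treeWeight_updF G Bp Ep Fp i j hij T l t
lemma hasDerivAt_cexp (c a t : ℝ) :
    HasDerivAt (fun t => c * Real.exp (a * t / 2)) (c * (a / 2) * Real.exp (a * t / 2)) t := by
  have h1 : HasDerivAt (fun t : ℝ => a * t / 2) (a / 2) t := by
    simpa using ((hasDerivAt_id t).const_mul a).div_const 2
  have h2 := ((Real.hasDerivAt_exp (a * t / 2)).comp t h1).const_mul c
  exact h2.congr_deriv (by ring)

lemma hasDerivAt_sumExp {ι : Type*} (s : Finset ι) (c a : ι → ℝ) (t : ℝ) :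
    HasDerivAt (fun t => ∑ x ∈ s, c x * Real.exp (a x * t / 2))
      (∑ x ∈ s, c x * (a x / 2) * Real.exp (a x * t / 2)) t :=
  HasDerivAt.fun_sum fun x _ => hasDerivAt_cexp (c x) (a x) t

lemma abs_sumExp_deriv_le {ι : Type*} (s : Finset ι) (c a : ι → ℝ) (t : ℝ)
    (hc : ∀ x ∈ s, 0 ≤ c x) (ha : ∀ x ∈ s, |a x| ≤ 1) :
    |∑ x ∈ s, c x * (a x / 2) * Real.exp (a x * t / 2)|
      ≤ (∑ x ∈ s, c x * Real.exp (a x * t / 2)) / 2 := by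
  rw [Finset.sum_div]
  refine (Finset.abs_sum_le_sum_abs _ _).trans (Finset.sum_le_sum fun x hx => ?_)
  rw [abs_mul, abs_mul, abs_of_nonneg (hc x hx), abs_of_nonneg (Real.exp_pos _).le]
  have h1 : |a x / 2| ≤ 1 / 2 := by
    rw [abs_div, abs_two]; linarith [ha x hx]
  have h2 := Real.exp_pos (a x * t / 2)
  have h3 := hc x hx
  have h4 := mul_le_mul_of_nonneg_right (mul_le_mul_of_nonneg_left h1 h3) h2.le
  linarith

lemma sumExp_nonneg {ι : Type*} (s : Finset ι) (c a : ι → ℝ) (t : ℝ)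
    (hc : ∀ x ∈ s, 0 ≤ c x) : 0 ≤ ∑ x ∈ s, c x * Real.exp (a x * t / 2) :=
  Finset.sum_nonneg fun x hx => mul_nonneg (hc x hx) (Real.exp_pos _).le
/-- `|∂π_k/∂F_ij| ≤ π_k(1-π_k) ≤ 1/4`. -/
theorem stmt14 {V : Type*} [Fintype V] [DecidableEq V]
    (G : SimpleGraph V) (hG : G.Connected)
    (Bp : V → V → ℝ) (Ep : V → ℝ) (Fp : V → V → ℝ)
    (hB : ∀ i j, Bp i j = Bp j i) (hF : ∀ i j, Fp i j = -Fp j i)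
    (i j : V) (hij : G.Adj i j) (k : V) :
    |deriv (fun t => piP G Bp Ep (updF Fp i j t) k) (Fp i j)|
        ≤ piP G Bp Ep Fp k * (1 - piP G Bp Ep Fp k) ∧
      piP G Bp Ep Fp k * (1 - piP G Bp Ep Fp k) ≤ 1 / 4 := by

  classical
  have hijne : i ≠ j := hij.ne
  have hupd : updF Fp i j (Fp i j) = Fp := by
    funext a b
    unfold updF
    split_ifs with h1 h2
    · rw [h1.1, h1.2]
    · rw [h2.1, h2.2, hF j i]
    · rfl
  set t₀ := Fp i j with ht₀
  set 𝒯 := Finset.univ.filter (fun T : SimpleGraph V => IsSpanningTree G T) with h𝒯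
  set c : SimpleGraph V → V → ℝ :=
    fun T l => treeWeight (rates G Bp Ep (updF Fp i j 0)) T l with hc
  set NN : V → ℝ → ℝ :=
    fun l t => ∑ T ∈ 𝒯, c T l * Real.exp (Acoef i j T l * t / 2) with hNN
  set NN' : V → ℝ → ℝ :=
    fun l t => ∑ T ∈ 𝒯, c T l * (Acoef i j T l / 2) * Real.exp (Acoef i j T l * t / 2) with hNN'
  have hN : ∀ l t, sumTrees (rates G Bp Ep (updF Fp i j t)) G l = NN l t :=
    fun l t => sumTrees_updF G Bp Ep Fp i j hijne l t
  have hNd : ∀ l t, HasDerivAt (NN l) (NN' l t) t :=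
    fun l t => hasDerivAt_sumExp 𝒯 (fun T => c T l) (fun T => Acoef i j T l) t
  have hcnn : ∀ T l, 0 ≤ c T l := fun T l => treeWeight_nonneg_s14 G Bp Ep _ T l
  have hNnn : ∀ l t, 0 ≤ NN l t :=
    fun l t => sumExp_nonneg 𝒯 _ _ t (fun T _ => hcnn T l)
  have hNb : ∀ l t, |NN' l t| ≤ NN l t / 2 :=
    fun l t => abs_sumExp_deriv_le 𝒯 _ _ t (fun T _ => hcnn T l)
      (fun T _ => abs_Acoef_le i j T l)
  have hf : (fun t => piP G Bp Ep (updF Fp i j t) k) = fun t => NN k t / ∑ l : V, NN l t := by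
    funext t
    unfold piP mttPi
    rw [hN k t]
    congr 1
    exact Finset.sum_congr rfl (fun l _ => hN l t)
  have hpik : piP G Bp Ep Fp k = NN k t₀ / ∑ l : V, NN l t₀ := by
    conv_lhs => rw [← hupd]
    exact congrFun hf t₀
  by_cases hD0 : (∑ l : V, NN l t₀) = 0
  · -- degenerate case: all coefficients vanish
    have hall : ∀ l, NN l t₀ = 0 := by
      intro l
      have := (Finset.sum_eq_zero_iff_of_nonneg
        (fun l _ => hNnn l t₀)).mp hD0 l (Finset.mem_univ l)
      exact this
    have hczero : ∀ T ∈ 𝒯, c T k = 0 := by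
      intro T hT
      have h0 := (Finset.sum_eq_zero_iff_of_nonneg
        (fun T hT => mul_nonneg (hcnn T k) (Real.exp_pos _).le)).mp (hall k) T hT
      have := Real.exp_pos (Acoef i j T k * t₀ / 2)
      nlinarith
    have hNk : ∀ t, NN k t = 0 := by
      intro t
      exact Finset.sum_eq_zero (fun T hT => by rw [hczero T hT, zero_mul])
    have hfz : (fun t => piP G Bp Ep (updF Fp i j t) k) = fun _ => (0 : ℝ) := by
      rw [hf]; funext t; rw [hNk t, zero_div]
    rw [hfz, hpik, hNk t₀, zero_div]
    norm_num
  · have hDpos : 0 < ∑ l : V, NN l t₀ :=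
      lt_of_le_of_ne (Finset.sum_nonneg fun l _ => hNnn l t₀) (Ne.symm hD0)
    have hDd : HasDerivAt (fun t => ∑ l : V, NN l t) (∑ l : V, NN' l t₀) t₀ :=
      HasDerivAt.fun_sum fun l _ => hNd l t₀
    have hdf : HasDerivAt (fun t => NN k t / ∑ l : V, NN l t)
        ((NN' k t₀ * (∑ l : V, NN l t₀) - NN k t₀ * (∑ l : V, NN' l t₀)) /
          (∑ l : V, NN l t₀) ^ 2) t₀ := (hNd k t₀).div hDd hD0
    have hderiv : deriv (fun t => piP G Bp Ep (updF Fp i j t) k) t₀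
        = (NN' k t₀ * (∑ l : V, NN l t₀) - NN k t₀ * (∑ l : V, NN' l t₀)) /
          (∑ l : V, NN l t₀) ^ 2 := by
      rw [hf]; exact hdf.deriv
    set n := NN k t₀
    set n' := NN' k t₀
    set m := ∑ l ∈ Finset.univ.erase k, NN l t₀ with hm
    set m' := ∑ l ∈ Finset.univ.erase k, NN' l t₀ with hm'
    have hd : (∑ l : V, NN l t₀) = n + m :=
      (Finset.add_sum_erase Finset.univ (fun l => NN l t₀) (Finset.mem_univ k)).symm
    have hd' : (∑ l : V, NN' l t₀) = n' + m' :=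
      (Finset.add_sum_erase Finset.univ (fun l => NN' l t₀) (Finset.mem_univ k)).symm
    have hmnn : 0 ≤ m := Finset.sum_nonneg fun l _ => hNnn l t₀
    have hnnn : 0 ≤ n := hNnn k t₀
    have hm'b : |m'| ≤ m / 2 := by
      calc |m'| ≤ ∑ l ∈ Finset.univ.erase k, |NN' l t₀| := Finset.abs_sum_le_sum_abs _ _
        _ ≤ ∑ l ∈ Finset.univ.erase k, NN l t₀ / 2 :=
            Finset.sum_le_sum fun l _ => hNb l t₀
        _ = m / 2 := by rw [hm, Finset.sum_div]
    have hn'b : |n'| ≤ n / 2 := hNb k t₀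
    have hdpos : 0 < n + m := hd ▸ hDpos
    have key : |n' * (n + m) - n * (n' + m')| ≤ n * m := by
      have h1 : n' * (n + m) - n * (n' + m') = n' * m - n * m' := by ring
      rw [h1]
      calc |n' * m - n * m'| ≤ |n' * m| + |n * m'| := abs_sub _ _
        _ = |n'| * m + n * |m'| := by
            rw [abs_mul, abs_mul, abs_of_nonneg hmnn, abs_of_nonneg hnnn]
        _ ≤ (n / 2) * m + n * (m / 2) := by
            have := mul_le_mul_of_nonneg_right hn'b hmnn
            have := mul_le_mul_of_nonneg_left hm'b hnnn
            linarith
        _ = n * m := by ring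
    have hπ : piP G Bp Ep Fp k = n / (n + m) := by rw [hpik, hd]
    have hone : 1 - n / (n + m) = m / (n + m) := by
      field_simp
      ring
    have hrhs : n / (n + m) * (1 - n / (n + m)) = n * m / (n + m) ^ 2 := by
      rw [hone, div_mul_div_comm, ← pow_two]
    constructor
    · rw [hderiv, hd, hd', hπ, hrhs, abs_div, abs_of_pos (pow_pos hdpos 2)]
      exact (div_le_div_iff_of_pos_right (pow_pos hdpos 2)).mpr key
    · rw [hπ]
      nlinarith [sq_nonneg (2 * (n / (n + m)) - 1)]
end

section
/- (Re-rooting identity) For any spanning tree T of G and any two vertices v, w, one has w(T_v) · w(T_{v→w}) = w(T_w) · w(T_{w→v}), where T_{v→w} denotes the unique directed path in T from v to w (the empty path, of weight 1, if v = w). -/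
open Finset

attribute [local instance] Classical.propDecidable

section RerootAux

open SimpleGraph

variable {V' : Type*} {T' : SimpleGraph V'}

/-- In an acyclic graph, every path realizes the distance between its endpoints. -/
lemma aux_length_eq_dist (hA : T'.IsAcyclic) {a r : V'} (p : T'.Walk a r) (hp : p.IsPath) :
    p.length = T'.dist a r := by
  obtain ⟨q, hq, hl⟩ := (p.reachable).exists_path_of_dist
  have h := hA.path_unique (⟨p, hp⟩ : T'.Path a r) ⟨q, hq⟩
  rw [show p = q from congrArg Subtype.val h, hl]

lemma aux_dist_le_of_mem (hA : T'.IsAcyclic) {a r x : V'} (p : T'.Walk a r) (hp : p.IsPath)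
    (hx : x ∈ p.support) : T'.dist a x ≤ T'.dist a r := by
  have h1 := aux_length_eq_dist hA (p.takeUntil x hx) (hp.takeUntil hx)
  rw [← h1, ← aux_length_eq_dist hA p hp]
  exact p.length_takeUntil_le hx

lemma aux_mem_iff (hA : T'.IsAcyclic) (hco : T'.Connected) {a r x : V'} (p : T'.Walk a r)
    (hp : p.IsPath) : x ∈ p.support ↔ T'.dist a x + T'.dist x r = T'.dist a r := by
  constructor
  · intro hx
    rw [← aux_length_eq_dist hA p hp, ← aux_length_eq_dist hA _ (hp.takeUntil hx),
        ← aux_length_eq_dist hA _ (hp.dropUntil hx), ← Walk.length_append, p.take_spec hx]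
  · intro h
    obtain ⟨p1, hp1, hl1⟩ := hco.exists_path_of_dist a x
    obtain ⟨p2, hp2, hl2⟩ := hco.exists_path_of_dist x r
    have hl : (p1.append p2).length = T'.dist a r := by
      rw [Walk.length_append, hl1, hl2, h]
    have hpath := (p1.append p2).isPath_of_length_eq_dist hl
    have heq := hA.path_unique (⟨p, hp⟩ : T'.Path a r) ⟨p1.append p2, hpath⟩
    rw [show p = p1.append p2 from congrArg Subtype.val heq, Walk.mem_support_append_iff]
    exact Or.inl p1.end_mem_support

lemma aux_adj_dist_iff (hA : T'.IsAcyclic) (hco : T'.Connected) {a b r : V'} (hab : T'.Adj a b)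
    (p : T'.Walk a r) (hp : p.IsPath) :
    T'.dist a r = T'.dist b r + 1 ↔ b ∈ p.support := by
  constructor
  · intro h
    obtain ⟨q, hq, hl⟩ := hco.exists_path_of_dist b r
    have hl' : (Walk.cons hab q).length = T'.dist a r := by
      rw [Walk.length_cons, hl, h]
    have hpath := (Walk.cons hab q).isPath_of_length_eq_dist hl'
    have heq := hA.path_unique (⟨p, hp⟩ : T'.Path a r) ⟨Walk.cons hab q, hpath⟩
    rw [show p = Walk.cons hab q from congrArg Subtype.val heq]
    simp [Walk.support_cons]
  · intro hb
    have h := (aux_mem_iff hA hco p hp).mp hb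
    have hab1 : T'.dist a b = 1 := SimpleGraph.dist_eq_one_iff_adj.mpr hab
    omega

lemma aux_dichotomy (hA : T'.IsAcyclic) (hco : T'.Connected) {a b : V'} (hab : T'.Adj a b)
    (r : V') : T'.dist a r = T'.dist b r + 1 ∨ T'.dist b r = T'.dist a r + 1 := by
  obtain ⟨p, hp, hl⟩ := hco.exists_path_of_dist a r
  by_cases hb : b ∈ p.support
  · exact Or.inl ((aux_adj_dist_iff hA hco hab p hp).mpr hb)
  · right
    have hpath : (Walk.cons hab.symm p).IsPath := hp.cons hb
    have h := aux_length_eq_dist hA _ hpath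
    rw [Walk.length_cons, hl] at h
    omega

lemma aux_flip (hA : T'.IsAcyclic) (hco : T'.Connected) {v w a b : V'} (hvw : T'.Adj v w)
    (hab : T'.Adj a b) (hne : s(a, b) ≠ s(v, w))
    (h1 : T'.dist a v = T'.dist b v + 1) (h2 : T'.dist b w = T'.dist a w + 1) : False := by
  have cva : T'.dist v a = T'.dist a v := SimpleGraph.dist_comm
  have cwa : T'.dist w a = T'.dist a w := SimpleGraph.dist_comm
  have cvb : T'.dist v b = T'.dist b v := SimpleGraph.dist_comm
  have cwb : T'.dist w b = T'.dist b w := SimpleGraph.dist_comm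
  have dA := aux_dichotomy hA hco hvw a
  have dB := aux_dichotomy hA hco hvw b
  -- the only surviving case is dist a v = dist a w + 1 and dist b w = dist b v + 1
  have hsur : T'.dist a v = T'.dist a w + 1 ∧ T'.dist b w = T'.dist b v + 1 := by
    rcases dA with hA1 | hA1 <;> rcases dB with hB1 | hB1 <;> omega
  obtain ⟨hs1, hs2⟩ := hsur
  have hvb : v ≠ b := by
    intro hvb
    have h0 : T'.dist b v = 0 := by rw [← hvb]; exact SimpleGraph.dist_self
    have h1' : T'.dist v w = 1 := SimpleGraph.dist_eq_one_iff_adj.mpr hvw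
    have haw : T'.dist a w = 0 := by omega
    have haw' : a = w := hco.dist_eq_zero_iff.mp haw
    rw [haw', hvb] at hne
    exact hne Sym2.eq_swap
  obtain ⟨P, hP, hPl⟩ := hco.exists_path_of_dist b w
  have haP : a ∈ P.support := (aux_adj_dist_iff hA hco hab.symm P hP).mp h2
  have hvP : v ∈ P.support := by
    rw [aux_mem_iff hA hco P hP]
    have h1' : T'.dist v w = 1 := SimpleGraph.dist_eq_one_iff_adj.mpr hvw
    omega
  rw [← P.take_spec haP, Walk.mem_support_append_iff] at hvP
  rcases hvP with hvP | hvP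
  · have h := (aux_mem_iff hA hco _ (hP.takeUntil haP)).mp hvP
    have hba1 : T'.dist b a = 1 := SimpleGraph.dist_eq_one_iff_adj.mpr hab.symm
    have hbv0 : T'.dist b v = 0 := by omega
    exact hvb (hco.dist_eq_zero_iff.mp hbv0).symm
  · have h := aux_dist_le_of_mem hA _ (hP.dropUntil haP) hvP
    omega

lemma aux_agree (hA : T'.IsAcyclic) (hco : T'.Connected) {v w a b : V'} (hvw : T'.Adj v w)
    (hab : T'.Adj a b) (hne : s(a, b) ≠ s(v, w)) :
    (T'.dist b v + 1 = T'.dist a v ↔ T'.dist b w + 1 = T'.dist a w) := by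
  constructor
  · intro h
    rcases aux_dichotomy hA hco hab w with h' | h'
    · omega
    · exact (aux_flip hA hco hvw hab hne h.symm h').elim
  · intro h
    rcases aux_dichotomy hA hco hab v with h' | h'
    · omega
    · have hne' : s(a, b) ≠ s(w, v) := fun hh => hne (hh.trans Sym2.eq_swap)
      exact (aux_flip hA hco hvw.symm hab hne' h.symm h').elim

lemma walkWeight_nil {V : Type*} (W : V → V → ℝ) {G : SimpleGraph V} {u : V} :
    walkWeight W (Walk.nil : G.Walk u u) = 1 := by
  simp [walkWeight]

lemma walkWeight_cons {V : Type*} (W : V → V → ℝ) {G : SimpleGraph V} {u v w : V}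
    (h : G.Adj u v) (p : G.Walk v w) :
    walkWeight W (Walk.cons h p) = W v u * walkWeight W p := by
  simp [walkWeight, Walk.darts_cons]

lemma walkWeight_append {V : Type*} (W : V → V → ℝ) {G : SimpleGraph V} {u v w : V}
    (p : G.Walk u v) (q : G.Walk v w) :
    walkWeight W (p.append q) = walkWeight W p * walkWeight W q := by
  simp [walkWeight, Walk.darts_append]

lemma walkWeight_reverse_cons {V : Type*} (W : V → V → ℝ) {G : SimpleGraph V} {u v w : V}
    (h : G.Adj u v) (p : G.Walk v w) :
    walkWeight W (Walk.cons h p).reverse = walkWeight W p.reverse * W u v := by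
  rw [Walk.reverse_cons, walkWeight_append]
  simp [walkWeight, Walk.darts_cons]

lemma aux_oneEdge {V : Type*} [Fintype V] [DecidableEq V] (W : V → V → ℝ)
    {T : SimpleGraph V} (hA : T.IsAcyclic) (hco : T.Connected)
    {v w : V} (hvw : T.Adj v w) :
    treeWeight W T v * W w v = treeWeight W T w * W v w := by
  classical
  unfold treeWeight
  have hd1 : T.dist w v = 1 := SimpleGraph.dist_eq_one_iff_adj.mpr hvw.symm
  have hd2 : T.dist v w = 1 := SimpleGraph.dist_eq_one_iff_adj.mpr hvw
  have hmemv : (w, v) ∈ Finset.univ.filter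
      (fun p : V × V => T.Adj p.1 p.2 ∧ T.dist p.2 v + 1 = T.dist p.1 v) := by
    simp [hvw.symm, SimpleGraph.dist_self, hd1]
  have hmemw : (v, w) ∈ Finset.univ.filter
      (fun p : V × V => T.Adj p.1 p.2 ∧ T.dist p.2 w + 1 = T.dist p.1 w) := by
    simp [hvw, SimpleGraph.dist_self, hd2]
  have herase : (Finset.univ.filter
        (fun p : V × V => T.Adj p.1 p.2 ∧ T.dist p.2 v + 1 = T.dist p.1 v)).erase (w, v)
      = (Finset.univ.filter
        (fun p : V × V => T.Adj p.1 p.2 ∧ T.dist p.2 w + 1 = T.dist p.1 w)).erase (v, w) := by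
    ext ⟨a, b⟩
    simp only [Finset.mem_erase, Finset.mem_filter, Finset.mem_univ, true_and, ne_eq,
      Prod.mk.injEq, not_and]
    constructor
    · rintro ⟨hne, hab, hd⟩
      have hs : s(a, b) ≠ s(v, w) := by
        intro hs
        rw [Sym2.eq_iff] at hs
        rcases hs with ⟨rfl, rfl⟩ | ⟨rfl, rfl⟩
        · rw [SimpleGraph.dist_self, hd1] at hd; omega
        · exact hne rfl rfl
      refine ⟨?_, hab, (aux_agree hA hco hvw hab hs).mp hd⟩
      rintro rfl rfl
      exact hs rfl
    · rintro ⟨hne, hab, hd⟩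
      have hs : s(a, b) ≠ s(v, w) := by
        intro hs
        rw [Sym2.eq_iff] at hs
        rcases hs with ⟨rfl, rfl⟩ | ⟨rfl, rfl⟩
        · exact hne rfl rfl
        · rw [SimpleGraph.dist_self, hd2] at hd; omega
      refine ⟨?_, hab, (aux_agree hA hco hvw hab hs).mpr hd⟩
      rintro rfl rfl
      exact hs Sym2.eq_swap
  rw [← Finset.mul_prod_erase _ _ hmemv, ← Finset.mul_prod_erase _ _ hmemw, herase]
  ring

lemma aux_reroot {V : Type*} [Fintype V] [DecidableEq V] (W : V → V → ℝ)
    {T : SimpleGraph V} (hA : T.IsAcyclic) (hco : T.Connected) :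
    ∀ {v w : V} (p : T.Walk v w), p.IsPath →
      treeWeight W T v * walkWeight W p = treeWeight W T w * walkWeight W p.reverse := by
  intro v w p
  induction p with
  | nil =>
    intro _
    rw [Walk.reverse_nil]
  | @cons v x w h p ih =>
    intro hp
    rw [walkWeight_cons, walkWeight_reverse_cons]
    have h1 := aux_oneEdge W hA hco h
    have h2 := ih hp.of_cons
    calc treeWeight W T v * (W x v * walkWeight W p)
        = (treeWeight W T v * W x v) * walkWeight W p := by ring
      _ = (treeWeight W T x * W v x) * walkWeight W p := by rw [h1]
      _ = (treeWeight W T x * walkWeight W p) * W v x := by ring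
      _ = (treeWeight W T w * walkWeight W p.reverse) * W v x := by rw [h2]
      _ = treeWeight W T w * (walkWeight W p.reverse * W v x) := by ring

end RerootAux

/-- re-rooting identity: for a spanning tree `T` and vertices
`v, w`, `w(T_v)·w(T_{v→w}) = w(T_w)·w(T_{w→v})`, where `T_{v→w}` is the unique
path in `T` from `v` to `w`. -/
theorem stmt15 {V : Type*} [Fintype V] [DecidableEq V] (W : V → V → ℝ)
    (hoff : ∀ i j, i ≠ j → 0 ≤ W i j)
    (hsym : ∀ i j, i ≠ j → (0 < W i j ↔ 0 < W j i))
    (hconn : (transGraph W).Connected)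
    (T : SimpleGraph V) (hT : IsSpanningTree (transGraph W) T)
    (v w : V) (p : T.Walk v w) (hp : p.IsPath) (q : T.Walk w v) (hq : q.IsPath) :
    treeWeight W T v * walkWeight W p = treeWeight W T w * walkWeight W q := by
  have hA := hT.2.2
  have hco := hT.2.1
  have hq' : q = p.reverse := by
    have h := hA.path_unique (⟨q, hq⟩ : T.Path w v) ⟨p.reverse, hp.reverse⟩
    exact congrArg Subtype.val h
  rw [hq']
  exact aux_reroot W hA hco p hp
end

section
/- For any positive real numbers a_0, a_1, b_0, b_1, one has |b_0 a_1 - a_0 b_1| / ((b_0 + b_1)(a_0 + a_1)) ≤ tanh( (1/4) |ln( (b_0 a_1)/(a_0 b_1) )| ). -/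
open Real

private lemma tanh_half_log {u : ℝ} (hu : 0 < u) :
    Real.tanh ((1 / 2) * Real.log u) = (u - 1) / (u + 1) := by
  have hs : 0 < Real.sqrt u := Real.sqrt_pos.2 hu
  have h1 : (1 / 2 : ℝ) * Real.log u = Real.log (Real.sqrt u) := by
    rw [Real.log_sqrt hu.le]; ring
  have he : Real.exp (Real.log (Real.sqrt u)) = Real.sqrt u := Real.exp_log hs
  have he' : Real.exp (-(Real.log (Real.sqrt u))) = (Real.sqrt u)⁻¹ := by
    rw [Real.exp_neg, he]
  have hsq : Real.sqrt u * Real.sqrt u = u := Real.mul_self_sqrt hu.le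
  rw [h1, Real.tanh_eq_sinh_div_cosh, Real.sinh_eq, Real.cosh_eq, he, he']
  field_simp
  rw [sq, hsq]; ring


private lemma key {x y D : ℝ} (hx : 0 < x) (hy : 0 < y) (hxy : y ≤ x)
    (hD : (Real.sqrt x + Real.sqrt y) ^ 2 ≤ D) :
    |x - y| / D ≤ Real.tanh ((1 / 4) * |Real.log (x / y)|) := by
  have hsx : 0 < Real.sqrt x := Real.sqrt_pos.2 hx
  have hsy : 0 < Real.sqrt y := Real.sqrt_pos.2 hy
  have hsxy : Real.sqrt y ≤ Real.sqrt x := Real.sqrt_le_sqrt hxy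
  have hu : 0 < x / y := div_pos hx hy
  have hlog : 0 ≤ Real.log (x / y) := Real.log_nonneg ((one_le_div hy).2 hxy)
  have h4 : (1 / 4 : ℝ) * |Real.log (x / y)| = (1 / 2) * Real.log (Real.sqrt (x / y)) := by
    rw [abs_of_nonneg hlog, Real.log_sqrt hu.le]; ring
  have hsu : 0 < Real.sqrt (x / y) := Real.sqrt_pos.2 hu
  rw [h4, tanh_half_log hsu]
  have hsdiv : Real.sqrt (x / y) = Real.sqrt x / Real.sqrt y := Real.sqrt_div' x hy.le ▸ by
    rw [Real.sqrt_div hx.le]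
  rw [hsdiv]
  have habs : |x - y| = (Real.sqrt x - Real.sqrt y) * (Real.sqrt x + Real.sqrt y) := by
    rw [abs_of_nonneg (by linarith)]
    have hxx : Real.sqrt x * Real.sqrt x = x := Real.mul_self_sqrt hx.le
    have hyy : Real.sqrt y * Real.sqrt y = y := Real.mul_self_sqrt hy.le
    nlinarith
  have hD0 : 0 < D := lt_of_lt_of_le (by positivity) hD
  have hr : (Real.sqrt x / Real.sqrt y - 1) / (Real.sqrt x / Real.sqrt y + 1)
      = (Real.sqrt x - Real.sqrt y) / (Real.sqrt x + Real.sqrt y) := by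
    rw [div_sub_one (ne_of_gt hsy), div_add_one (ne_of_gt hsy)]
    rw [div_div_div_eq, mul_comm (Real.sqrt x - Real.sqrt y), mul_div_mul_left _ _ (ne_of_gt hsy)]
  rw [hr, habs, div_le_div_iff₀ hD0 (by positivity)]
  nlinarith [mul_le_mul_of_nonneg_left hD (sub_nonneg.2 hsxy)]

private lemma key2 {x y D : ℝ} (hx : 0 < x) (hy : 0 < y)
    (hD : (Real.sqrt x + Real.sqrt y) ^ 2 ≤ D) :
    |x - y| / D ≤ Real.tanh ((1 / 4) * |Real.log (x / y)|) := by
  rcases le_total y x with h | h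
  · exact key hx hy h hD
  · have h1 : |x - y| = |y - x| := abs_sub_comm x y
    have h2 : |Real.log (x / y)| = |Real.log (y / x)| := by
      rw [Real.log_div (ne_of_gt hx) (ne_of_gt hy),
        Real.log_div (ne_of_gt hy) (ne_of_gt hx), abs_sub_comm]
    rw [h1, h2]
    exact key hy hx h (by rw [add_comm] at hD; exact hD)

/-- for positive reals `a₀, a₁, b₀, b₁`,
`|b₀a₁ - a₀b₁|/((b₀+b₁)(a₀+a₁)) ≤ tanh((1/4)|ln((b₀a₁)/(a₀b₁))|)`. -/
theorem stmt16 (a0 a1 b0 b1 : ℝ) (ha0 : 0 < a0) (ha1 : 0 < a1)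
    (hb0 : 0 < b0) (hb1 : 0 < b1) :
    |b0 * a1 - a0 * b1| / ((b0 + b1) * (a0 + a1))
      ≤ Real.tanh ((1 / 4) * |Real.log (b0 * a1 / (a0 * b1))|) := by
  apply key2 (by positivity) (by positivity)
  have h1 : Real.sqrt (b0 * a1) * Real.sqrt (a0 * b1)
      = Real.sqrt (b0 * a0) * Real.sqrt (a1 * b1) := by
    rw [← Real.sqrt_mul (by positivity), ← Real.sqrt_mul (by positivity)]
    ring_nf
  have h2 : 2 * (Real.sqrt (b0 * a0) * Real.sqrt (a1 * b1)) ≤ b0 * a0 + a1 * b1 := by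
    nlinarith [Real.sq_sqrt (mul_pos hb0 ha0).le, Real.sq_sqrt (mul_pos ha1 hb1).le,
      sq_nonneg (Real.sqrt (b0 * a0) - Real.sqrt (a1 * b1))]
  have h3 : Real.sq_sqrt (mul_pos hb0 ha1).le = Real.sq_sqrt (mul_pos hb0 ha1).le := rfl
  nlinarith [Real.sq_sqrt (mul_pos hb0 ha1).le, Real.sq_sqrt (mul_pos ha0 hb1).le, h1, h2]
end

section
/- Suppose the transition graph G is a single cycle C through all N ≥ 3 vertices, and let {m,n} be an edge of C. The spanning trees of G are exactly the paths obtained by deleting one edge of C; let S be the spanning tree obtained by deleting {m,n}, and let T be any spanning tree containing {m,n}. Then w(T_m) w(S_n) = exp(F_C) · w(T_n) w(S_m), where F_C is the cycle force of C in the orientation that traverses the edge {m,n} from n to m. -/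
open Finset

attribute [local instance] Classical.propDecidable

section AuxLemmas

open SimpleGraph Walk

variable {V : Type*}

lemma tree_path_length {G : SimpleGraph V} (hG : G.IsTree) {x y : V}
    {p : G.Walk x y} (hp : p.IsPath) : p.length = G.dist x y := by
  have h1 : G.dist x y ≤ p.length := SimpleGraph.dist_le p
  obtain ⟨w, hw⟩ := hG.isConnected.exists_walk_length_eq_dist x y
  have huniq := isAcyclic_iff_path_unique.mp hG.IsAcyclic
    (⟨p, hp⟩ : G.Path x y) ⟨w.bypass, w.bypass_isPath⟩
  have hpw : p = w.bypass := congrArg Subtype.val huniq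
  have h2 : w.bypass.length ≤ w.length := w.length_bypass_le
  rw [hpw] at h1 ⊢
  omega

lemma tree_adj_dist_one {G : SimpleGraph V} (hG : G.IsTree) {a b : V}
    (h : G.Adj a b) : G.dist a b = 1 := by
  have hp : (Walk.cons h Walk.nil).IsPath := by
    simp [Walk.cons_isPath_iff, h.ne]
  have := tree_path_length hG hp
  simpa using this.symm

lemma path_concat {G : SimpleGraph V} {x a b : V} {p : G.Walk x b} (hp : p.IsPath)
    (h : G.Adj b a) (ha : a ∉ p.support) : (p.concat h).IsPath := by
  have h2 : (Walk.cons h.symm p.reverse).IsPath := hp.reverse.cons (by simpa using ha)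
  have h3 := h2.reverse
  simpa [Walk.reverse_cons, Walk.reverse_reverse, Walk.concat_eq_append] using h3

lemma tree_dist_dichotomy [DecidableEq V] {G : SimpleGraph V} (hG : G.IsTree) {a b : V}
    (hab : G.Adj a b) (x : V) :
    G.dist x b = G.dist x a + 1 ∨ G.dist x a = G.dist x b + 1 := by
  obtain ⟨w⟩ := hG.isConnected.preconnected x b
  have hp : w.bypass.IsPath := w.bypass_isPath
  set p := w.bypass with hpdef
  have hlen : p.length = G.dist x b := tree_path_length hG hp
  by_cases ha : a ∈ p.support
  · left
    have h1 := tree_path_length hG (hp.takeUntil ha)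
    have h2 := tree_path_length hG (hp.dropUntil ha)
    have h3 : (p.takeUntil a ha).length + (p.dropUntil a ha).length = p.length := by
      rw [← Walk.length_append, Walk.take_spec]
    rw [tree_adj_dist_one hG hab] at h2
    omega
  · right
    have hq : (p.concat hab.symm).IsPath := path_concat hp hab.symm ha
    have h4 := tree_path_length hG hq
    rw [Walk.length_concat] at h4
    omega

lemma tree_orient_aux [DecidableEq V] {G : SimpleGraph V} (hG : G.IsTree) {a b i j : V}
    (hab : G.Adj a b) (hij : G.Adj i j) (hne : s(i,j) ≠ s(a,b))
    (h1 : G.dist j a + 1 = G.dist i a) : G.dist j b + 1 = G.dist i b := by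
  by_contra h2
  have di := tree_dist_dichotomy hG hab i
  have dj := tree_dist_dichotomy hG hab j
  have dij := tree_dist_dichotomy hG hij b
  rw [SimpleGraph.dist_comm (u:=b) (v:=j), SimpleGraph.dist_comm (u:=b) (v:=i)] at dij
  have hcross : G.dist j b = G.dist i b + 1 := by
    rcases dij with h | h
    · exact h
    · exact absurd h.symm h2
  have hia : G.dist i a = G.dist i b + 1 := by omega
  have hjb : G.dist j b = G.dist j a + 1 := by omega
  by_cases hd0 : G.dist j a = 0
  · have hja : j = a := (hG.isConnected.preconnected j a).dist_eq_zero_iff.mp hd0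
    have hib : i = b := by
      have : G.dist i b = 0 := by omega
      exact (hG.isConnected.preconnected i b).dist_eq_zero_iff.mp this
    apply hne
    rw [hja, hib, Sym2.eq_swap]
  · obtain ⟨w1⟩ := hG.isConnected.preconnected j a
    have hppath : w1.bypass.IsPath := w1.bypass_isPath
    set p := w1.bypass with hp
    have hplen : p.length = G.dist j a := tree_path_length hG hppath
    have hine : i ≠ a := by
      intro h; rw [h] at h1; rw [SimpleGraph.dist_self] at h1; omega
    have hi_not : ∀ (s : G.Walk j a), s.IsPath → i ∉ s.support := by
      intro s hs hi
      have e1 := tree_path_length hG (hs.takeUntil hi)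
      have e2 := tree_path_length hG (hs.dropUntil hi)
      have e3 : (s.takeUntil i hi).length + (s.dropUntil i hi).length = s.length := by
        rw [← Walk.length_append, Walk.take_spec]
      have e4 := tree_path_length hG hs
      rw [tree_adj_dist_one hG hij.symm] at e1
      omega
    obtain ⟨w2⟩ := hG.isConnected.preconnected j b
    have hrpath : w2.bypass.IsPath := w2.bypass_isPath
    set r := w2.bypass with hr
    have hrlen : r.length = G.dist j b := tree_path_length hG hrpath
    have ha_mem : a ∈ r.support := by
      by_contra ha
      have := tree_path_length hG (path_concat hrpath hab.symm ha)
      rw [Walk.length_concat] at this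
      omega
    have hi_not_r : i ∉ r.support := by
      intro hi
      rw [← Walk.take_spec r ha_mem, Walk.mem_support_append_iff] at hi
      have htake := hrpath.takeUntil ha_mem
      have hdrop := hrpath.dropUntil ha_mem
      have hlt := tree_path_length hG htake
      have hld := tree_path_length hG hdrop
      rw [tree_adj_dist_one hG hab] at hld
      have hsum : (r.takeUntil a ha_mem).length + (r.dropUntil a ha_mem).length = r.length := by
        rw [← Walk.length_append, Walk.take_spec]
      rcases hi with hi | hi
      · exact hi_not _ htake hi
      · have e1 := tree_path_length hG (hdrop.takeUntil hi)
        have e2 := tree_path_length hG (hdrop.dropUntil hi)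
        have e3 : ((r.dropUntil a ha_mem).takeUntil i hi).length
            + ((r.dropUntil a ha_mem).dropUntil i hi).length
            = (r.dropUntil a ha_mem).length := by
          rw [← Walk.length_append, Walk.take_spec]
        have hai : G.dist a i = 0 := by omega
        have : a = i := (hG.isConnected.preconnected a i).dist_eq_zero_iff.mp hai
        exact hine this.symm
    have hcons : (Walk.cons hij r).IsPath := hrpath.cons hi_not_r
    have hfin := tree_path_length hG hcons
    rw [Walk.length_cons] at hfin
    omega

lemma tree_orient_eq [DecidableEq V] {G : SimpleGraph V} (hG : G.IsTree) {a b i j : V}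
    (hab : G.Adj a b) (hij : G.Adj i j) (hne : s(i,j) ≠ s(a,b)) :
    G.dist j a + 1 = G.dist i a ↔ G.dist j b + 1 = G.dist i b := by
  constructor
  · exact tree_orient_aux hG hab hij hne
  · apply tree_orient_aux hG hab.symm hij
    rw [Sym2.eq_swap (a := a)] at hne
    exact hne

lemma treeWeight_flip [Fintype V] [DecidableEq V] (W : V → V → ℝ) {T : SimpleGraph V}
    (hT : T.IsTree) {m n : V} (h : T.Adj m n) :
    treeWeight W T m * W n m = treeWeight W T n * W m n := by
  have hd1 : T.dist n m = 1 := tree_adj_dist_one hT h.symm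
  have hd2 : T.dist m n = 1 := tree_adj_dist_one hT h
  set Dm := Finset.univ.filter
      (fun p : V × V => T.Adj p.1 p.2 ∧ T.dist p.2 m + 1 = T.dist p.1 m) with hDm
  set Dn := Finset.univ.filter
      (fun p : V × V => T.Adj p.1 p.2 ∧ T.dist p.2 n + 1 = T.dist p.1 n) with hDn
  have hmemm : ((n, m) : V × V) ∈ Dm := by
    simp [hDm, Finset.mem_filter, h.symm, hd1, SimpleGraph.dist_self]
  have hmemn : ((m, n) : V × V) ∈ Dn := by
    simp [hDn, Finset.mem_filter, h, hd2, SimpleGraph.dist_self]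
  have key : Dm.erase (n, m) = Dn.erase (m, n) := by
    ext ⟨i, j⟩
    simp only [Finset.mem_erase, hDm, hDn, Finset.mem_filter, Finset.mem_univ, true_and,
      Ne, Prod.mk.injEq, not_and]
    constructor
    · rintro ⟨hne1, hadj, hdist⟩
      have hne2 : ¬(i = m ∧ j = n) := by
        rintro ⟨rfl, rfl⟩
        rw [SimpleGraph.dist_self] at hdist
        omega
      have hnes : s(i, j) ≠ s(m, n) := by
        intro hs
        rcases Sym2.eq_iff.mp hs with ⟨rfl, rfl⟩ | ⟨rfl, rfl⟩
        · exact hne2 ⟨rfl, rfl⟩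
        · exact hne1 rfl rfl
      refine ⟨fun hi hj => hne2 ⟨hi, hj⟩, hadj, ?_⟩
      exact (tree_orient_eq hT h hadj hnes).mp hdist
    · rintro ⟨hne2, hadj, hdist⟩
      have hne1 : ¬(i = n ∧ j = m) := by
        rintro ⟨rfl, rfl⟩
        rw [SimpleGraph.dist_self] at hdist
        omega
      have hnes : s(i, j) ≠ s(m, n) := by
        intro hs
        rcases Sym2.eq_iff.mp hs with ⟨rfl, rfl⟩ | ⟨rfl, rfl⟩
        · exact hne2 rfl rfl
        · exact hne1 ⟨rfl, rfl⟩
      refine ⟨fun hi hj => hne1 ⟨hi, hj⟩, hadj, ?_⟩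
      exact (tree_orient_eq hT h hadj hnes).mpr hdist
  have e1 : treeWeight W T m = W m n * ∏ p ∈ Dm.erase (n, m), W p.2 p.1 := by
    rw [treeWeight, ← hDm]
    conv_lhs => rw [← Finset.insert_erase hmemm]
    rw [Finset.prod_insert (Finset.notMem_erase _ _)]
  have e2 : treeWeight W T n = W n m * ∏ p ∈ Dn.erase (m, n), W p.2 p.1 := by
    rw [treeWeight, ← hDn]
    conv_lhs => rw [← Finset.insert_erase hmemn]
    rw [Finset.prod_insert (Finset.notMem_erase _ _)]
  rw [e1, e2, key]
  ring

lemma walkWeight_reverse_eq {W : V → V → ℝ} {G : SimpleGraph V} {u v : V} (p : G.Walk u v) :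
    walkWeight W p.reverse = (p.darts.map (fun d => W d.fst d.snd)).prod := by
  rw [walkWeight, Walk.darts_reverse, List.map_reverse, List.prod_reverse, List.map_map]
  rfl

lemma treeWeight_walk [Fintype V] [DecidableEq V] (W : V → V → ℝ) {G S : SimpleGraph V}
    (hS : S.IsTree) {a b : V} (p : G.Walk a b) (hp : ∀ e ∈ p.edges, e ∈ S.edgeSet) :
    treeWeight W S a * walkWeight W p = treeWeight W S b * walkWeight W p.reverse := by
  induction p with
  | nil => simp [walkWeight]
  | @cons a c b h q ih =>
    have hS1 : S.Adj a c := by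
      have := hp s(a, c) (by simp)
      rwa [SimpleGraph.mem_edgeSet] at this
    have hq : ∀ e ∈ q.edges, e ∈ S.edgeSet := fun e he => hp e (by simp [he])
    have ih' := ih hq
    have hflip := treeWeight_flip W hS hS1
    have h1 : walkWeight W (Walk.cons h q) = W c a * walkWeight W q := by
      simp [walkWeight]
    have h2 : walkWeight W (Walk.cons h q).reverse
        = W a c * walkWeight W q.reverse := by
      rw [walkWeight_reverse_eq, walkWeight_reverse_eq]
      simp [Walk.darts_cons]
    rw [h1, h2]
    linear_combination walkWeight W q * hflip + W a c * ih'

end AuxLemmas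

/-- for a single-cycle graph through all `N ≥ 3` vertices, a
spanning tree `T` containing the edge `{m,n}` and the spanning tree `S`
obtained by deleting `{m,n}`, one has
`w(T_m)w(S_n) = exp(F_C)·w(T_n)w(S_m)`, where the cycle is oriented so as to
traverse `{m,n}` from `n` to `m`. -/
theorem stmt17 {V : Type*} [Fintype V] [DecidableEq V] (W : V → V → ℝ)
    (hoff : ∀ i j, i ≠ j → 0 ≤ W i j)
    (hsym : ∀ i j, i ≠ j → (0 < W i j ↔ 0 < W j i))
    (hN : 3 ≤ Fintype.card V)
    (u : V) (c : (transGraph W).Walk u u) (hc : c.IsCycle)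
    (hall : ∀ x : V, x ∈ c.support)
    (hedges : ∀ e, e ∈ (transGraph W).edgeSet ↔ e ∈ c.edges)
    (m n : V) (hmn : (transGraph W).Adj m n)
    (hd : ∃ d ∈ c.darts, d.toProd = (n, m))
    (S : SimpleGraph V) (hS : IsSpanningTree (transGraph W) S) (hSmn : ¬S.Adj m n)
    (T : SimpleGraph V) (hT : IsSpanningTree (transGraph W) T) (hTmn : T.Adj m n) :
    treeWeight W T m * treeWeight W S n
      = Real.exp (cycleForce W c) * (treeWeight W T n * treeWeight W S m) := by
  classical
  -- rotate the cycle to start at n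
  have hn : n ∈ c.support := hall n
  have hc' : (c.rotate n hn).IsCycle := hc.rotate hn
  have hdperm : (c.rotate n hn).darts.Perm c.darts := (c.rotate_darts n hn).perm
  have hd' : ∃ d ∈ (c.rotate n hn).darts, d.toProd = (n, m) := by
    obtain ⟨d, hdm, hdp⟩ := hd
    exact ⟨d, hdperm.mem_iff.mpr hdm, hdp⟩
  have hnn : ¬ (c.rotate n hn).Nil := hc'.not_nil
  obtain ⟨x, hadj, q, hq⟩ := SimpleGraph.Walk.not_nil_iff.mp hnn
  have hqcyc : (SimpleGraph.Walk.cons hadj q).IsCycle := hq ▸ hc'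
  obtain ⟨hqpath, hqedge⟩ := (SimpleGraph.Walk.cons_isCycle_iff q hadj).mp hqcyc
  -- the successor of n in the rotated cycle is m
  have hxm : x = m := by
    obtain ⟨d, hdmem, hdp⟩ := hd'
    rw [hq, SimpleGraph.Walk.darts_cons] at hdmem
    rcases List.mem_cons.mp hdmem with rfl | hdq
    · have : (n, x) = (n, m) := hdp
      exact (Prod.mk.injEq _ _ _ _ ▸ this).2
    · exfalso
      have hfst : n ∈ q.darts.map (fun d => d.fst) := by
        refine List.mem_map.mpr ⟨d, hdq, ?_⟩
        rw [hdp]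
      rw [SimpleGraph.Walk.map_fst_darts] at hfst
      have hnodup := hqpath.support_nodup
      have hne : q.support ≠ [] := SimpleGraph.Walk.support_ne_nil q
      have hdecomp : q.support.dropLast ++ [q.support.getLast hne] = q.support :=
        List.dropLast_append_getLast hne
      have hlast : q.support.getLast hne = n := SimpleGraph.Walk.getLast_support q
      rw [← hdecomp, hlast] at hnodup
      have hnodup2 : (n :: q.support.dropLast).Nodup := List.nodup_append_comm.mp hnodup
      exact (List.nodup_cons.mp hnodup2).1 hfst
  subst x
  -- edge sets and counting
  haveI : Fintype (transGraph W).edgeSet := Fintype.ofFinite _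
  haveI : Fintype S.edgeSet := Fintype.ofFinite _
  have hGedge : (transGraph W).edgeFinset = c.edges.toFinset := by
    ext e
    rw [SimpleGraph.mem_edgeFinset, List.mem_toFinset, ← hedges]
  have hclen : c.length = Fintype.card V := by
    have htail : c.support.tail.length = c.length := by
      have := c.length_support
      have := c.support.length_tail
      omega
    have hnodup : c.support.tail.Nodup := hc.support_nodup
    have hle : c.support.tail.length ≤ Fintype.card V := hnodup.length_le_card
    have hsubuniv : (Finset.univ : Finset V) ⊆ c.support.tail.toFinset := by
      intro y _
      rw [List.mem_toFinset]
      by_cases hy : y = u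
      · subst hy
        obtain ⟨z, hz, q0, hq0⟩ := SimpleGraph.Walk.not_nil_iff.mp hc.not_nil
        rw [hq0, SimpleGraph.Walk.support_cons]
        simpa using q0.end_mem_support
      · have hmem := hall y
        rw [c.support_eq_cons] at hmem
        rcases List.mem_cons.mp hmem with h' | h'
        · exact absurd h' hy
        · exact h'
    have hge : Fintype.card V ≤ c.support.tail.length := by
      calc Fintype.card V = (Finset.univ : Finset V).card := (Finset.card_univ).symm
        _ ≤ c.support.tail.toFinset.card := Finset.card_le_card hsubuniv
        _ ≤ c.support.tail.length := c.support.tail.toFinset_card_le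
    omega
  have hGcard : (transGraph W).edgeFinset.card = Fintype.card V := by
    rw [hGedge, List.toFinset_card_of_nodup hc.edges_nodup,
      SimpleGraph.Walk.length_edges, hclen]
  have hmnG : s(m, n) ∈ (transGraph W).edgeFinset := by
    rw [SimpleGraph.mem_edgeFinset, SimpleGraph.mem_edgeSet]
    exact hmn
  have hSeq : S.edgeFinset = (transGraph W).edgeFinset.erase s(m, n) := by
    apply Finset.eq_of_subset_of_card_le
    · intro e he
      rw [Finset.mem_erase]
      constructor
      · intro hcon
        rw [hcon, SimpleGraph.mem_edgeFinset, SimpleGraph.mem_edgeSet] at he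
        exact hSmn he
      · rw [SimpleGraph.mem_edgeFinset] at he ⊢
        revert he
        refine Sym2.ind (fun a b hab => ?_) e
        rw [SimpleGraph.mem_edgeSet] at hab ⊢
        exact hS.1 hab
    · have hScard := hS.2.card_edgeFinset
      rw [Finset.card_erase_of_mem hmnG, hGcard]
      omega
  -- the rest of the cycle is a walk from m to n with edges in S
  have hSedge : ∀ e ∈ q.edges, e ∈ S.edgeSet := by
    intro e he
    have hec' : e ∈ (c.rotate n hn).edges := by
      rw [hq, SimpleGraph.Walk.edges_cons]
      exact List.mem_cons.mpr (Or.inr he)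
    have hec : e ∈ c.edges := (c.rotate_edges n hn).perm.mem_iff.mp hec'
    have heG : e ∈ (transGraph W).edgeFinset := by
      rw [hGedge, List.mem_toFinset]; exact hec
    have hene : e ≠ s(m, n) := by
      intro hcon
      apply hqedge
      rw [Sym2.eq_swap, ← hcon]
      exact he
    have : e ∈ S.edgeFinset := by
      rw [hSeq, Finset.mem_erase]; exact ⟨hene, heG⟩
    rwa [SimpleGraph.mem_edgeFinset] at this
  -- positivity
  have hWmn : 0 < W m n := hmn.2.1
  have hWnm : 0 < W n m := hmn.2.2
  have hwq : 0 < walkWeight W q := by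
    rw [walkWeight]
    apply List.prod_pos
    intro r hr
    obtain ⟨d, hdm, rfl⟩ := List.mem_map.mp hr
    exact d.adj.2.2
  have hwqr : 0 < walkWeight W q.reverse := by
    rw [walkWeight_reverse_eq]
    apply List.prod_pos
    intro r hr
    obtain ⟨d, hdm, rfl⟩ := List.mem_map.mp hr
    exact d.adj.2.1
  -- identify the cycle force
  have hwc : walkWeight W c = W m n * walkWeight W q := by
    have : walkWeight W c = walkWeight W (c.rotate n hn) := by
      rw [walkWeight, walkWeight]
      exact (List.Perm.prod_eq (hdperm.map _)).symm
    rw [this, hq]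
    simp [walkWeight]
  have hwcr : walkWeight W c.reverse = W n m * walkWeight W q.reverse := by
    rw [walkWeight_reverse_eq]
    have : (c.darts.map (fun d => W d.fst d.snd)).prod
        = ((c.rotate n hn).darts.map (fun d => W d.fst d.snd)).prod :=
      (List.Perm.prod_eq (hdperm.map _)).symm
    rw [this, hq, SimpleGraph.Walk.darts_cons, List.map_cons, List.prod_cons,
      ← walkWeight_reverse_eq]
  have hforce : Real.exp (cycleForce W c)
      = (W m n * walkWeight W q) / (W n m * walkWeight W q.reverse) := by
    rw [cycleForce, hwc, hwcr, Real.exp_log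
      (div_pos (mul_pos hWmn hwq) (mul_pos hWnm hwqr))]
  -- the two key identities
  have hflipT : treeWeight W T m * W n m = treeWeight W T n * W m n :=
    treeWeight_flip W hT.2 hTmn
  have hwalkS : treeWeight W S m * walkWeight W q = treeWeight W S n * walkWeight W q.reverse :=
    treeWeight_walk W hS.2 q hSedge
  rw [hforce, div_mul_eq_mul_div, eq_div_iff (mul_pos hWnm hwqr).ne']
  linear_combination (treeWeight W S n * walkWeight W q.reverse) * hflipT
    - (treeWeight W T n * W m n) * hwalkS
end
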